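/- The minimum distance d of a self-dual additive code over F_{m^2} equals δ + 1, where δ is the minimum vertex degree taken over all weighted graphs in the generalized-LC orbit associated to the code. -/

import Mathlib

open scoped BigOperators

/-- The trace map from `F_{p^r}` to the prime field `F_p`, computed inside `F`. -/
def fieldTr {F : Type*} [Field F] (p r : ℕ) (x : F) : F :=
  ∑ i ∈ Finset.range r, x ^ p ^ i

/-- The symplectic (trace) inner product on `(F_m × F_m)^n`. -/
def sympForm {F : Type*} [Field F] (p r : ℕ) {n : ℕ} (u v : Fin n → F × F) : F :=
  fieldTr p r (∑ i, ((u i).2 * (v i).1 - (v i).2 * (u i).1))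

/-- Action of an element of `Sp_2(F_m)` on a coordinate `F_m × F_m ≅ F_{m^2}`. -/
def sl2Apply {F : Type*} [Field F] (M : Matrix.SpecialLinearGroup (Fin 2) F)
    (x : F × F) : F × F :=
  (M.1 0 0 * x.1 + M.1 0 1 * x.2, M.1 1 0 * x.1 + M.1 1 1 * x.2)

/-- Weight shifting at vertex `u` by `a`. -/
def wsMat {F : Type*} [Field F] {n : ℕ} (a : F) (u : Fin n)
    (Γ : Matrix (Fin n) (Fin n) F) : Matrix (Fin n) (Fin n) F :=
  Matrix.of fun i j => if i = u ∨ j = u then a * Γ i j else Γ i j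

/-- Generalized local complementation at vertex `v` by `a`. -/
def glcMat {F : Type*} [Field F] {n : ℕ} (a : F) (v : Fin n)
    (Γ : Matrix (Fin n) (Fin n) F) : Matrix (Fin n) (Fin n) F :=
  Matrix.of fun i j => if i = j then 0 else Γ i j + a * Γ v i * Γ v j

/-- Relabelling of vertices by a permutation. -/
def permMat {F : Type*} [Field F] {n : ℕ} (σ : Equiv.Perm (Fin n))
    (Γ : Matrix (Fin n) (Fin n) F) : Matrix (Fin n) (Fin n) F :=
  Matrix.of fun i j => Γ (σ i) (σ j)

/-- One step of the generalized-LC orbit: a weight shift, a generalized local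
    complementation, or a graph isomorphism (vertex permutation). -/
def lcStep {F : Type*} [Field F] {n : ℕ}
    (Γ Γ' : Matrix (Fin n) (Fin n) F) : Prop :=
  (∃ a : F, a ≠ 0 ∧ ∃ u, Γ' = wsMat a u Γ) ∨
  (∃ a : F, a ≠ 0 ∧ ∃ v, Γ' = glcMat a v Γ) ∨
  (∃ σ : Equiv.Perm (Fin n), Γ' = permMat σ Γ)

set_option linter.unusedSectionVars false
set_option maxHeartbeats 1000000
section Aux
variable {F : Type} [Field F] [DecidableEq F] {n : ℕ}

/-- graph codeword -/
def gcw (Γ : Matrix (Fin n) (Fin n) F) (lam : Fin n → F) : Fin n → F × F :=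
  fun i => ((∑ k, lam k * Γ k i : F), lam i)

def wtv (u : Fin n → F × F) : ℕ := (Finset.univ.filter fun i => u i ≠ (0 : F × F)).card

def Good (Γ : Matrix (Fin n) (Fin n) F) : Prop := Γ.IsSymm ∧ ∀ i, Γ i i = 0

lemma wtv_congr {u u' : Fin n → F × F} (h : ∀ i, u i = 0 ↔ u' i = 0) : wtv u = wtv u' := by
  unfold wtv
  congr 1
  apply Finset.filter_congr
  intro i _
  exact not_congr (h i)

lemma sum_update_mul (lam g : Fin n → F) (v : Fin n) (c : F) :
    ∑ k, Function.update lam v c k * g k = (∑ k, lam k * g k) + (c - lam v) * g v := by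
  have h : ∀ k, Function.update lam v c k * g k
      = lam k * g k + (if k = v then (c - lam v) * g v else 0) := by
    intro k
    by_cases hk : k = v
    · subst hk; simp [Function.update_self]; ring
    · simp [Function.update_of_ne hk, hk]
  rw [Finset.sum_congr rfl (fun k _ => h k), Finset.sum_add_distrib]
  simp

lemma wtv_pos {Γ : Matrix (Fin n) (Fin n) F} {lam : Fin n → F} (h : lam ≠ 0) :
    0 < wtv (gcw Γ lam) := by
  obtain ⟨i, hi⟩ := Function.ne_iff.mp h
  apply Finset.card_pos.mpr
  refine ⟨i, ?_⟩
  simp only [Finset.mem_filter, Finset.mem_univ, true_and]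
  intro hc
  exact hi (congrArg Prod.snd hc)

lemma lam_ne_of_wt_pos {Γ : Matrix (Fin n) (Fin n) F} {lam : Fin n → F}
    (h : 0 < wtv (gcw Γ lam)) : lam ≠ 0 := by
  rintro rfl
  simp [wtv, gcw] at h


section Glc
variable {F : Type} [Field F] [DecidableEq F] {n : ℕ}
variable {Γ : Matrix (Fin n) (Fin n) F}

lemma glc_sum (hG : Good Γ) (a : F) (v : Fin n) (mu : Fin n → F) (i : Fin n) :
    ∑ k, mu k * glcMat a v Γ k i
      = (∑ k, mu k * Γ k i) + a * Γ v i * (∑ k, mu k * Γ k v) - a * mu i * (Γ v i)^2 := by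
  have hterm : ∀ k, mu k * glcMat a v Γ k i
      = mu k * Γ k i + a * Γ v i * (mu k * Γ k v)
        - (if k = i then mu i * (Γ i i + a * Γ v i * Γ v i) else 0) := by
    intro k
    by_cases hk : k = i
    · subst hk
      simp only [glcMat, Matrix.of_apply, if_pos rfl, hG.1.apply v k]
      simp
      ring
    · simp only [glcMat, Matrix.of_apply, if_neg hk, hG.1.apply v k]
      ring
  rw [Finset.sum_congr rfl (fun k _ => hterm k), Finset.sum_sub_distrib, Finset.sum_add_distrib,
    ← Finset.mul_sum]
  simp [hG.2 i]
  ring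

lemma glc_zero_iff (hG : Good Γ) (a : F) (v : Fin n) (lam : Fin n → F) (i : Fin n) :
    gcw (glcMat a v Γ) (Function.update lam v (lam v - a * ∑ k, lam k * Γ k v)) i = 0
      ↔ gcw Γ lam i = 0 := by
  set x : Fin n → F := fun j => ∑ k, lam k * Γ k j with hx
  set lam' := Function.update lam v (lam v - a * x v) with hl
  have hsum1 : ∑ k, lam' k * Γ k i = x i + ((lam v - a * x v) - lam v) * Γ v i :=
    sum_update_mul lam (fun k => Γ k i) v _
  have hsum2 : ∑ k, lam' k * Γ k v = x v := by
    rw [hl, sum_update_mul lam (fun k => Γ k v) v _]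
    simp [hG.2 v]
    rfl
  have hfirst : ∑ k, lam' k * glcMat a v Γ k i = x i - a * lam' i * (Γ v i)^2 := by
    rw [glc_sum hG, hsum1, hsum2]; ring
  show (∑ k, lam' k * glcMat a v Γ k i, lam' i) = 0 ↔ (x i, lam i) = 0
  rw [hfirst, Prod.mk_eq_zero, Prod.mk_eq_zero]
  by_cases hiv : i = v
  · subst hiv
    rw [hl, Function.update_self, hG.2 i]
    constructor
    · rintro ⟨h1, h2⟩
      ring_nf at h1 ⊢
      refine ⟨h1, ?_⟩
      rw [h1, mul_zero, sub_zero] at h2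
      exact h2
    · rintro ⟨h1, h2⟩
      ring_nf at h1 ⊢
      exact ⟨h1, by rw [h1, h2]; ring⟩
  · rw [hl, Function.update_of_ne hiv]
    constructor
    · rintro ⟨h1, h2⟩
      rw [h2, mul_zero, zero_mul, sub_zero] at h1
      exact ⟨h1, h2⟩
    · rintro ⟨h1, h2⟩
      rw [h1, h2]
      exact ⟨by ring, rfl⟩

lemma ws_zero_iff (hG : Good Γ) {a : F} (ha : a ≠ 0) (u : Fin n) (lam : Fin n → F)
    (i : Fin n) :
    gcw (wsMat a u Γ) (Function.update lam u (a⁻¹ * lam u)) i = 0 ↔ gcw Γ lam i = 0 := by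
  set lam' := Function.update lam u (a⁻¹ * lam u) with hl
  have hsum : ∑ k, lam' k * wsMat a u Γ k i
      = if i = u then a * ∑ k, lam k * Γ k i else ∑ k, lam k * Γ k i := by
    by_cases hiu : i = u
    · subst hiu
      rw [if_pos rfl, Finset.mul_sum]
      apply Finset.sum_congr rfl
      intro k _
      by_cases hk : k = i
      · subst hk
        rw [hl, Function.update_self]
        simp [wsMat, hG.2 k]
      · rw [hl, Function.update_of_ne hk]
        simp [wsMat, hk]
        ring
    · rw [if_neg hiu]
      apply Finset.sum_congr rfl
      intro k _
      by_cases hk : k = u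
      · subst hk
        rw [hl, Function.update_self]
        simp [wsMat, hiu]
        field_simp
      · rw [hl, Function.update_of_ne hk]
        simp [wsMat, hk, hiu]
  show (∑ k, lam' k * wsMat a u Γ k i, lam' i) = 0 ↔ (∑ k, lam k * Γ k i, lam i) = 0
  rw [hsum, Prod.mk_eq_zero, Prod.mk_eq_zero]
  by_cases hiu : i = u
  · subst hiu
    rw [if_pos rfl, hl, Function.update_self]
    simp [mul_eq_zero, ha, inv_eq_zero]
  · rw [if_neg hiu, hl, Function.update_of_ne hiu]

lemma perm_gcw (σ : Equiv.Perm (Fin n)) (lam : Fin n → F) (i : Fin n) :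
    gcw (permMat σ Γ) (fun k => lam (σ k)) i = gcw Γ lam (σ i) := by
  show (∑ k, lam (σ k) * permMat σ Γ k i, lam (σ i)) = (∑ k, lam k * Γ k (σ i), lam (σ i))
  congr 1
  have : ∀ k, lam (σ k) * permMat σ Γ k i = lam (σ k) * Γ (σ k) (σ i) := by
    intro k; simp [permMat]
  rw [Finset.sum_congr rfl (fun k _ => this k)]
  exact Equiv.sum_comp σ (fun k => lam k * Γ k (σ i))

lemma wtv_comp_perm (u : Fin n → F × F) (σ : Equiv.Perm (Fin n)) :
    wtv (fun i => u (σ i)) = wtv u := by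
  unfold wtv
  apply Finset.card_bij (fun i _ => σ i)
  · intro i hi
    simp only [Finset.mem_filter, Finset.mem_univ, true_and] at hi ⊢
    exact hi
  · intro i _ j _ h
    exact σ.injective h
  · intro j hj
    refine ⟨σ.symm j, ?_, by simp⟩
    simp only [Finset.mem_filter, Finset.mem_univ, true_and] at hj ⊢
    simpa using hj

lemma good_step {Γ Γ' : Matrix (Fin n) (Fin n) F} (h : lcStep Γ Γ') (hG : Good Γ) :
    Good Γ' := by
  obtain ⟨a, ha, u, rfl⟩ | ⟨a, ha, v, rfl⟩ | ⟨σ, rfl⟩ := h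
  · constructor
    · ext i j
      simp only [Matrix.transpose_apply, wsMat, Matrix.of_apply, or_comm (a := j = u)]
      rw [hG.1.apply i j]
    · intro i
      simp [wsMat, hG.2 i]
  · constructor
    · ext i j
      simp only [Matrix.transpose_apply, glcMat, Matrix.of_apply, eq_comm (a := j)]
      rw [hG.1.apply i j]
      ring_nf
    · intro i; simp [glcMat]
  · constructor
    · ext i j
      simp only [Matrix.transpose_apply, permMat, Matrix.of_apply]
      exact hG.1.apply (σ i) (σ j)
    · intro i; simp [permMat, hG.2]

lemma step_inv {Γ Γ' : Matrix (Fin n) (Fin n) F} (h : lcStep Γ Γ') (hG : Good Γ) :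
    lcStep Γ' Γ := by
  obtain ⟨a, ha, u, rfl⟩ | ⟨a, ha, v, rfl⟩ | ⟨σ, rfl⟩ := h
  · refine Or.inl ⟨a⁻¹, inv_ne_zero ha, u, ?_⟩
    ext i j
    by_cases hc : i = u ∨ j = u
    · simp [wsMat, hc, ha]
    · simp [wsMat, hc]
  · refine Or.inr (Or.inl ⟨-a, neg_ne_zero.mpr ha, v, ?_⟩)
    have e1 : ∀ i, glcMat a v Γ v i = Γ v i := by
      intro i
      by_cases hvi : v = i
      · subst hvi; simp [glcMat, hG.2 v]
      · simp [glcMat, hvi, hG.2 v]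
    ext i j
    by_cases hij : i = j
    · subst hij; simp [glcMat, hG.2 i]
    · have h2 : glcMat (-a) v (glcMat a v Γ) i j
          = glcMat a v Γ i j + (-a) * (glcMat a v Γ v i) * (glcMat a v Γ v j) := by
        show (if i = j then (0:F) else glcMat a v Γ i j
          + (-a) * (glcMat a v Γ v i) * (glcMat a v Γ v j)) = _
        rw [if_neg hij]
      have h3 : glcMat a v Γ i j = Γ i j + a * Γ v i * Γ v j := by
        show (if i = j then (0:F) else Γ i j + a * Γ v i * Γ v j) = _
        rw [if_neg hij]
      rw [h2, e1, e1, h3]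
      ring
  · refine Or.inr (Or.inr ⟨σ⁻¹, ?_⟩)
    ext i j
    simp [permMat]

lemma step_wt {Γ Γ' : Matrix (Fin n) (Fin n) F} (h : lcStep Γ Γ') (hG : Good Γ)
    (lam : Fin n → F) : ∃ lam', wtv (gcw Γ' lam') = wtv (gcw Γ lam) := by
  obtain ⟨a, ha, u, rfl⟩ | ⟨a, ha, v, rfl⟩ | ⟨σ, rfl⟩ := h
  · exact ⟨_, wtv_congr (fun i => ws_zero_iff hG ha u lam i)⟩
  · exact ⟨_, wtv_congr (fun i => glc_zero_iff hG a v lam i)⟩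
  · refine ⟨fun k => lam (σ k), ?_⟩
    have : ∀ i, gcw (permMat σ Γ) (fun k => lam (σ k)) i = gcw Γ lam (σ i) :=
      perm_gcw σ lam
    have h1 : wtv (gcw (permMat σ Γ) fun k => lam (σ k))
        = wtv (fun i => gcw Γ lam (σ i)) := by
      unfold wtv
      congr 1
      apply Finset.filter_congr
      intro i _
      rw [this i]
    rw [h1]
    exact wtv_comp_perm _ σ

lemma orbit_inv {Γ₀ Γ : Matrix (Fin n) (Fin n) F} (hG0 : Good Γ₀)
    (h : Relation.ReflTransGen lcStep Γ₀ Γ) :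
    Good Γ ∧ ∀ w : ℕ, (∃ lam : Fin n → F, lam ≠ 0 ∧ wtv (gcw Γ lam) = w) ↔
      (∃ lam : Fin n → F, lam ≠ 0 ∧ wtv (gcw Γ₀ lam) = w) := by
  induction h with
  | refl => exact ⟨hG0, fun w => Iff.rfl⟩
  | tail hs hstep ih =>
    obtain ⟨hGb, hiff⟩ := ih
    refine ⟨good_step hstep hGb, fun w => ?_⟩
    rw [← hiff w]
    constructor
    · rintro ⟨lam, hlam, rfl⟩
      obtain ⟨lam', hw⟩ := step_wt (step_inv hstep hGb) (good_step hstep hGb) lam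
      exact ⟨lam', lam_ne_of_wt_pos (by rw [hw]; exact wtv_pos hlam), hw⟩
    · rintro ⟨lam, hlam, rfl⟩
      obtain ⟨lam', hw⟩ := step_wt hstep hGb lam
      exact ⟨lam', lam_ne_of_wt_pos (by rw [hw]; exact wtv_pos hlam), hw⟩

lemma wtv_single {Γ : Matrix (Fin n) (Fin n) F} (hG : Good Γ) (v : Fin n) {c : F}
    (hc : c ≠ 0) :
    wtv (gcw Γ (fun k => if k = v then c else 0))
      = (Finset.univ.filter fun j => j ≠ v ∧ Γ v j ≠ 0).card + 1 := by
  have hsum : ∀ i, ∑ k, (if k = v then c else 0) * Γ k i = c * Γ v i := by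
    intro i
    rw [Finset.sum_eq_single v]
    · simp
    · intro k _ hk; simp [hk]
    · intro h; exact absurd (Finset.mem_univ v) h
  have hset : (Finset.univ.filter fun i => gcw Γ (fun k => if k = v then c else 0) i ≠ 0)
      = insert v (Finset.univ.filter fun j => j ≠ v ∧ Γ v j ≠ 0) := by
    ext i
    simp only [Finset.mem_insert, Finset.mem_filter, Finset.mem_univ, true_and]
    show ¬((∑ k, (if k = v then c else 0) * Γ k i, if i = v then c else 0) = 0) ↔ _
    rw [hsum i, Prod.mk_eq_zero]
    by_cases hiv : i = v
    · subst hiv; simp [hc]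
    · simp [hiv, hc]
  unfold wtv
  rw [hset, Finset.card_insert_of_notMem (by simp)]

lemma moveA {Γ : Matrix (Fin n) (Fin n) F} (hG : Good Γ) (lam : Fin n → F) (v : Fin n)
    (hv : lam v ≠ 0) (hx : (∑ k, lam k * Γ k v) ≠ 0) :
    ∃ Γ', lcStep Γ Γ' ∧
      (∀ i, gcw Γ' (Function.update lam v 0) i = 0 ↔ gcw Γ lam i = 0) := by
  set x := ∑ k, lam k * Γ k v with hxd
  set a := lam v * x⁻¹ with had
  have ha0 : a ≠ 0 := mul_ne_zero hv (inv_ne_zero hx)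
  refine ⟨glcMat a v Γ, Or.inr (Or.inl ⟨a, ha0, v, rfl⟩), ?_⟩
  have hval : lam v - a * x = 0 := by
    rw [had]
    field_simp
    ring
  have h2 : Function.update lam v (0:F) = Function.update lam v (lam v - a * x) := by
    rw [hval]
  intro i
  rw [h2]
  exact glc_zero_iff hG a v lam i

lemma mainB {Γ₀ : Matrix (Fin n) (Fin n) F} (hG0 : Good Γ₀) (D : ℕ) (hD : 0 < D)
    (hbase : ∀ lam : Fin n → F, lam ≠ 0 → D ≤ wtv (gcw Γ₀ lam)) :
    ∀ t (Γ : Matrix (Fin n) (Fin n) F) (lam : Fin n → F),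
      Relation.ReflTransGen lcStep Γ₀ Γ → lam ≠ 0 → wtv (gcw Γ lam) = D →
      (Finset.univ.filter fun i => lam i ≠ 0).card ≤ t →
      ∃ Γ' v, Relation.ReflTransGen lcStep Γ₀ Γ' ∧
        (Finset.univ.filter fun j => j ≠ v ∧ Γ' v j ≠ 0).card = D - 1 := by
  intro t
  induction t with
  | zero =>
    intro Γ lam _ hlam _ hcard
    exfalso
    apply hlam
    funext i
    by_contra hi
    have : i ∈ Finset.univ.filter fun i => lam i ≠ 0 := by
      simp only [Finset.mem_filter, Finset.mem_univ, true_and]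
      exact fun h => hi h
    have := Finset.card_pos.mpr ⟨i, this⟩
    omega
  | succ t ih =>
    intro Γ lam horb hlam hwt hcard
    obtain ⟨hG, hiff⟩ := orbit_inv hG0 horb
    have hbd : ∀ mu : Fin n → F, mu ≠ 0 → D ≤ wtv (gcw Γ mu) := by
      intro mu hmu
      obtain ⟨lam0, hlam0, hw0⟩ := (hiff (wtv (gcw Γ mu))).mp ⟨mu, hmu, rfl⟩
      rw [← hw0]
      exact hbase lam0 hlam0
    -- erase-support helper
    have hcard_upd : ∀ v : Fin n, lam v ≠ 0 →
        (Finset.univ.filter fun i => Function.update lam v 0 i ≠ 0).card ≤ t := by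
      intro v hv
      have hsub : (Finset.univ.filter fun i => Function.update lam v 0 i ≠ 0)
          ⊆ (Finset.univ.filter fun i => lam i ≠ 0).erase v := by
        intro i hi
        simp only [Finset.mem_filter, Finset.mem_univ, true_and] at hi
        by_cases hiv : i = v
        · subst hiv; rw [Function.update_self] at hi; exact absurd rfl hi
        · rw [Function.update_of_ne hiv] at hi
          simp only [Finset.mem_erase, Finset.mem_filter, Finset.mem_univ, true_and]
          exact ⟨hiv, hi⟩
      have hvmem : v ∈ Finset.univ.filter fun i => lam i ≠ 0 := by
        simp only [Finset.mem_filter, Finset.mem_univ, true_and]; exact hv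
      calc (Finset.univ.filter fun i => Function.update lam v 0 i ≠ 0).card
          ≤ ((Finset.univ.filter fun i => lam i ≠ 0).erase v).card := Finset.card_le_card hsub
        _ = (Finset.univ.filter fun i => lam i ≠ 0).card - 1 := Finset.card_erase_of_mem hvmem
        _ ≤ t := by omega
    by_cases hA : ∃ v, lam v ≠ 0 ∧ (∑ k, lam k * Γ k v) ≠ 0
    · obtain ⟨v, hv, hxv⟩ := hA
      obtain ⟨Γ', hstep, hziff⟩ := moveA hG lam v hv hxv
      have horb' := horb.tail hstep
      have hwt' : wtv (gcw Γ' (Function.update lam v 0)) = D := by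
        rw [wtv_congr hziff]; exact hwt
      exact ih Γ' (Function.update lam v 0) horb'
        (lam_ne_of_wt_pos (by rw [hwt']; exact hD)) hwt' (hcard_upd v hv)
    · push_neg at hA
      by_cases ht1 : (Finset.univ.filter fun i => lam i ≠ 0).card = 1
      · -- single support: Γ itself works
        obtain ⟨v, hveq⟩ := Finset.card_eq_one.mp ht1
        have hv : lam v ≠ 0 := by
          have : v ∈ Finset.univ.filter fun i => lam i ≠ 0 := by rw [hveq]; simp
          simpa using this
        have hlameq : lam = fun k => if k = v then lam v else 0 := by
          funext k
          by_cases hk : k = v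
          · subst hk; simp
          · have : k ∉ Finset.univ.filter fun i => lam i ≠ 0 := by
              rw [hveq]; simp [hk]
            simp only [Finset.mem_filter, Finset.mem_univ, true_and, not_not] at this
            simp [hk, this]
        refine ⟨Γ, v, horb, ?_⟩
        have := wtv_single hG v hv
        rw [← hlameq] at this
        rw [hwt] at this
        omega
      · -- |S| ≥ 2
        have hS1 : 1 ≤ (Finset.univ.filter fun i => lam i ≠ 0).card := by
          obtain ⟨i, hi⟩ := Function.ne_iff.mp hlam
          apply Finset.card_pos.mpr
          refine ⟨i, ?_⟩
          simp only [Finset.mem_filter, Finset.mem_univ, true_and]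
          exact fun h => hi h
        have hS2 : 2 ≤ (Finset.univ.filter fun i => lam i ≠ 0).card := by omega
        by_cases hW : ∃ w v, lam v ≠ 0 ∧ w ≠ v ∧ Γ w v ≠ 0 ∧ (∑ k, lam k * Γ k w) = 0
        · obtain ⟨w, v, hv, hwv, hΓwv, hxw⟩ := hW
          have hstep : lcStep Γ (glcMat 1 w Γ) := Or.inr (Or.inl ⟨1, one_ne_zero, w, rfl⟩)
          have hupd : Function.update lam w (lam w - 1 * ∑ k, lam k * Γ k w) = lam := by
            rw [hxw]
            simp
          have hziff : ∀ i, gcw (glcMat 1 w Γ) lam i = 0 ↔ gcw Γ lam i = 0 := by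
            intro i
            have h0 := glc_zero_iff hG 1 w lam i
            rwa [hupd] at h0
          have hwt' : wtv (gcw (glcMat 1 w Γ) lam) = D := by rw [wtv_congr hziff]; exact hwt
          have hG' := good_step hstep hG
          have horb' := horb.tail hstep
          -- new x at v is nonzero
          have hxv' : (∑ k, lam k * glcMat 1 w Γ k v) ≠ 0 := by
            rw [glc_sum hG 1 w lam v, hA v hv, hxw]
            intro h
            have h2 : lam v * Γ w v ^ 2 = 0 := by linear_combination -h
            rcases mul_eq_zero.mp h2 with h3 | h3
            · exact hv h3
            · exact hΓwv (pow_eq_zero_iff two_ne_zero |>.mp h3)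
          obtain ⟨Γ'', hstep2, hziff2⟩ := moveA hG' lam v hv hxv'
          have horb'' := horb'.tail hstep2
          have hwt'' : wtv (gcw Γ'' (Function.update lam v 0)) = D := by
            rw [wtv_congr hziff2]; exact hwt'
          exact ih Γ'' (Function.update lam v 0) horb''
            (lam_ne_of_wt_pos (by rw [hwt'']; exact hD)) hwt'' (hcard_upd v hv)
        · -- counting contradiction
          exfalso
          push_neg at hW
          obtain ⟨v0, hv0⟩ := Function.ne_iff.mp hlam
          have hv0' : lam v0 ≠ 0 := fun h => hv0 h
          set S := Finset.univ.filter fun i => lam i ≠ 0 with hSd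
          set T := Finset.univ.filter fun i => (∑ k, lam k * Γ k i) ≠ 0 with hTd
          have hdisj : Disjoint S T := by
            rw [Finset.disjoint_left]
            intro i hiS hiT
            simp only [hSd, hTd, Finset.mem_filter, Finset.mem_univ, true_and] at hiS hiT
            exact hiT (hA i hiS)
          have hunion : (Finset.univ.filter fun i => gcw Γ lam i ≠ 0) = S ∪ T := by
            ext i
            simp only [hSd, hTd, Finset.mem_union, Finset.mem_filter, Finset.mem_univ, true_and]
            show ¬((∑ k, lam k * Γ k i, lam i) = 0) ↔ _
            rw [Prod.mk_eq_zero]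
            tauto
          have hD_eq : D = S.card + T.card := by
            rw [← hwt]
            unfold wtv
            rw [hunion, Finset.card_union_of_disjoint hdisj]
          have hNsub : (Finset.univ.filter fun j => j ≠ v0 ∧ Γ v0 j ≠ 0) ⊆ T := by
            intro j hj
            simp only [Finset.mem_filter, Finset.mem_univ, true_and] at hj
            obtain ⟨hjv, hΓj⟩ := hj
            simp only [hTd, Finset.mem_filter, Finset.mem_univ, true_and]
            exact hW j v0 hv0' hjv (by rw [hG.1.apply v0 j]; exact hΓj)
          have hdeg : D ≤ (Finset.univ.filter fun j => j ≠ v0 ∧ Γ v0 j ≠ 0).card + 1 := by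
            have hone : (fun k => if k = v0 then (1:F) else 0) ≠ 0 := by
              intro h
              have := congrFun h v0
              simp at this
            have := hbd _ hone
            rw [wtv_single hG v0 one_ne_zero] at this
            exact this
          have := Finset.card_le_card hNsub
          omega

lemma sl2_zero_iff (M : Matrix.SpecialLinearGroup (Fin 2) F) (x : F × F) :
    sl2Apply M x = 0 ↔ x = 0 := by
  constructor
  · intro h
    have hdet : M.1 0 0 * M.1 1 1 - M.1 0 1 * M.1 1 0 = 1 := by
      have h2 := M.2
      rwa [Matrix.det_fin_two] at h2
    rw [sl2Apply, Prod.mk_eq_zero] at h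
    obtain ⟨h1, h2⟩ := h
    have hx1 : x.1 = 0 := by
      linear_combination M.1 1 1 * h1 - M.1 0 1 * h2 - x.1 * hdet
    have hx2 : x.2 = 0 := by
      linear_combination (- M.1 1 0) * h1 + M.1 0 0 * h2 - x.2 * hdet
    rw [Prod.ext_iff]
    exact ⟨hx1, hx2⟩
  · rintro rfl
    simp [sl2Apply]

end Glc

/-- The minimum distance `d` of a self-dual additive code over `F_{m^2}` equals
    `δ + 1`, where `δ` is the minimum vertex degree over all weighted graphs in the
    generalized-LC orbit associated to the code (via any graph representation `Γ₀`
    of the code). -/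
theorem stmt12 (p r n m : ℕ) (hp : p.Prime) (hr : 0 < r) (hm : m = p ^ r) (hn : 0 < n)
    (F : Type) [Field F] [Fintype F] [DecidableEq F] (hF : Fintype.card F = m)
    (C : Submodule F (Fin n → F × F))
    (hsd : ∀ u, u ∈ C ↔ ∀ c ∈ C, sympForm p r u c = 0)
    (Γ₀ : Matrix (Fin n) (Fin n) F) (hsym : Γ₀.IsSymm) (hdiag : ∀ i, Γ₀ i i = 0)
    (hrep : ∃ (σ : Equiv.Perm (Fin n)) (S : Fin n → Matrix.SpecialLinearGroup (Fin 2) F),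
      ∀ u : Fin n → F × F,
        (∃ c ∈ C, (fun i => sl2Apply (S i) (c (σ⁻¹ i))) = u) ↔
        ∃ lam : Fin n → F, u = fun i => ((∑ k, lam k * Γ₀ k i : F), lam i)) :
    sInf {w : ℕ | ∃ c ∈ C, c ≠ 0 ∧
        (Finset.univ.filter fun i => c i ≠ (0 : F × F)).card = w} =
      sInf {k : ℕ | ∃ Γ : Matrix (Fin n) (Fin n) F, Relation.ReflTransGen lcStep Γ₀ Γ ∧
        ∃ v : Fin n, (Finset.univ.filter fun j => j ≠ v ∧ Γ v j ≠ 0).card = k} + 1 := by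
  classical
  obtain ⟨σ, S, hrep'⟩ := hrep
  have hG0 : Good Γ₀ := ⟨hsym, hdiag⟩
  have hsetEq : {w : ℕ | ∃ c ∈ C, c ≠ 0 ∧
        (Finset.univ.filter fun i => c i ≠ (0 : F × F)).card = w}
      = {w : ℕ | ∃ lam : Fin n → F, lam ≠ 0 ∧ wtv (gcw Γ₀ lam) = w} := by
    ext w
    simp only [Set.mem_setOf_eq]
    constructor
    · rintro ⟨c, hc, hc0, rfl⟩
      obtain ⟨lam, hlam⟩ := (hrep' (fun i => sl2Apply (S i) (c (σ⁻¹ i)))).mp ⟨c, hc, rfl⟩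
      have hpt : ∀ i, gcw Γ₀ lam i = 0 ↔ c (σ⁻¹ i) = 0 := by
        intro i
        rw [show gcw Γ₀ lam i = sl2Apply (S i) (c (σ⁻¹ i)) from (congrFun hlam i).symm]
        exact sl2_zero_iff (S i) _
      refine ⟨lam, ?_, ?_⟩
      · intro h0
        apply hc0
        funext j
        have := (hpt (σ j)).mp (by rw [h0]; simp [gcw])
        simpa using this
      · have h1 : wtv (gcw Γ₀ lam) = wtv (fun i => c (σ⁻¹ i)) := wtv_congr hpt
        have h2 : wtv (fun i => c ((σ⁻¹ : Equiv.Perm (Fin n)) i)) = wtv c :=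
          wtv_comp_perm c σ⁻¹
        rw [h1, h2]
        rfl
    · rintro ⟨lam, hlam0, rfl⟩
      obtain ⟨c, hc, heq⟩ := (hrep' (gcw Γ₀ lam)).mpr ⟨lam, rfl⟩
      have hpt : ∀ i, gcw Γ₀ lam i = 0 ↔ c (σ⁻¹ i) = 0 := by
        intro i
        rw [show gcw Γ₀ lam i = sl2Apply (S i) (c (σ⁻¹ i)) from (congrFun heq i).symm]
        exact sl2_zero_iff (S i) _
      refine ⟨c, hc, ?_, ?_⟩
      · intro h0
        apply hlam0
        funext i
        have h3 := (hpt i).mpr (by rw [h0]; rfl)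
        have h4 := congrArg Prod.snd h3
        simpa [gcw] using h4
      · have h1 : wtv (gcw Γ₀ lam) = wtv (fun i => c (σ⁻¹ i)) := wtv_congr hpt
        have h2 : wtv (fun i => c ((σ⁻¹ : Equiv.Perm (Fin n)) i)) = wtv c :=
          wtv_comp_perm c σ⁻¹
        show wtv c = wtv (gcw Γ₀ lam)
        rw [h1, h2]
  have hLHS : {w : ℕ | ∃ c ∈ C, c ≠ 0 ∧
        (Finset.univ.filter fun i => c i ≠ (0 : F × F)).card = w}
      = {w : ℕ | ∃ lam : Fin n → F, lam ≠ 0 ∧ wtv (gcw Γ₀ lam) = w} := hsetEq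
  rw [hLHS]
  set W0 := {w : ℕ | ∃ lam : Fin n → F, lam ≠ 0 ∧ wtv (gcw Γ₀ lam) = w} with hW0
  set D := sInf W0 with hDdef
  have hv0 : Fin n := ⟨0, hn⟩
  have hone : (fun k => if k = hv0 then (1:F) else 0) ≠ 0 := by
    intro h
    have := congrFun h hv0
    simp at this
  have hW0ne : W0.Nonempty := ⟨_, _, hone, rfl⟩
  have hDmem : D ∈ W0 := Nat.sInf_mem hW0ne
  obtain ⟨lam, hlam, hwt⟩ := hDmem
  have hDpos : 0 < D := by
    rw [← hwt]
    exact wtv_pos hlam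
  have hbase : ∀ mu : Fin n → F, mu ≠ 0 → D ≤ wtv (gcw Γ₀ mu) := by
    intro mu hmu
    exact Nat.sInf_le ⟨mu, hmu, rfl⟩
  set K := {k : ℕ | ∃ Γ : Matrix (Fin n) (Fin n) F, Relation.ReflTransGen lcStep Γ₀ Γ ∧
      ∃ v : Fin n, (Finset.univ.filter fun j => j ≠ v ∧ Γ v j ≠ 0).card = k} with hKdef
  have hKlb : ∀ k ∈ K, D - 1 ≤ k := by
    rintro k ⟨Γ, horb, v, hdeg⟩
    obtain ⟨hG, hiff⟩ := orbit_inv hG0 horb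
    have honev : (fun j => if j = v then (1:F) else 0) ≠ 0 := by
      intro h
      have := congrFun h v
      simp at this
    have hw : wtv (gcw Γ (fun j => if j = v then (1:F) else 0)) = k + 1 := by
      rw [wtv_single hG v one_ne_zero, hdeg]
    obtain ⟨lam0, hlam0, hw0⟩ := (hiff (k+1)).mp ⟨_, honev, hw⟩
    have : D ≤ k + 1 := by
      rw [← hw0]
      exact hbase lam0 hlam0
    omega
  obtain ⟨Γ', v, horb', hdeg⟩ := mainB hG0 D hDpos hbase
    (Finset.univ.filter fun i => lam i ≠ 0).card Γ₀ lam Relation.ReflTransGen.refl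
    hlam hwt le_rfl
  have hmem : D - 1 ∈ K := ⟨Γ', horb', v, hdeg⟩
  have hKle : sInf K ≤ D - 1 := Nat.sInf_le hmem
  have hKge : D - 1 ≤ sInf K := le_csInf ⟨_, hmem⟩ hKlb
  omega
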